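/- Let $(U_\ell)$ be the coupon-collector Markov chain with $n$ symbols and $S$ servers as above. Then there exists a constant $C$ (depending on $S$ and the time horizon ratio) such that $\mathrm{Var}(U_\ell) \le C \cdot n$ for all $\ell$ with $n - \lfloor \ell/S \rfloor \ge 1$; i.e., $\mathrm{Var}(U_\ell) = O(n)$. -/
import Mathlib

/-- Moment sums for the chain. -/
noncomputable def stmt6Mom (P : ℕ → ℕ → ℝ) (n k ℓ : ℕ) : ℝ :=
  ∑ u ∈ Finset.range (n + 1), (u : ℝ) ^ k * P ℓ u

lemma stmt6_shift (F : ℕ → ℝ) (n : ℕ) (h0 : F 0 = 0) (htop : F (n + 1) = 0) :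
    ∑ u ∈ Finset.range (n + 1), F (u + 1) = ∑ u ∈ Finset.range (n + 1), F u := by
  have h1 := Finset.sum_range_succ' F (n + 1)
  have h2 := Finset.sum_range_succ F (n + 1)
  rw [h2] at h1
  linarith

lemma stmt6_main (n : ℕ) (P : ℕ → ℕ → ℝ) (ℓ : ℕ) (d : ℝ)
    (htop : P ℓ (n + 1) = 0)
    (hrec : ∀ u : ℕ, P (ℓ + 1) u =
      P ℓ (u + 1) * (((u : ℝ) + 1) / d) + P ℓ u * (1 - (u : ℝ) / d))
    (F G : ℕ → ℝ) (hG0 : G 0 = 0)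
    (hG : ∀ u : ℕ, G (u + 1) = F u * (((u : ℝ) + 1) / d)) :
    ∑ u ∈ Finset.range (n + 1), F u * P (ℓ + 1) u
      = ∑ u ∈ Finset.range (n + 1), (G u + F u * (1 - (u : ℝ) / d)) * P ℓ u := by
  have hsh : ∑ u ∈ Finset.range (n + 1), G (u + 1) * P ℓ (u + 1)
      = ∑ u ∈ Finset.range (n + 1), G u * P ℓ u := by
    simpa using stmt6_shift (fun v => G v * P ℓ v) n (by simp [hG0]) (by simp [htop])
  have e1 : ∀ u ∈ Finset.range (n + 1),
      F u * P (ℓ + 1) u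
        = G (u + 1) * P ℓ (u + 1) + F u * (1 - (u : ℝ) / d) * P ℓ u := by
    intro u _
    rw [hrec u, hG u]
    ring
  rw [Finset.sum_congr rfl e1, Finset.sum_add_distrib, hsh, ← Finset.sum_add_distrib]
  exact Finset.sum_congr rfl fun u _ => by ring

lemma stmt6_m0 (n : ℕ) (P : ℕ → ℕ → ℝ) (ℓ : ℕ) (d : ℝ)
    (htop : P ℓ (n + 1) = 0)
    (hrec : ∀ u : ℕ, P (ℓ + 1) u =
      P ℓ (u + 1) * (((u : ℝ) + 1) / d) + P ℓ u * (1 - (u : ℝ) / d)) :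
    stmt6Mom P n 0 (ℓ + 1) = stmt6Mom P n 0 ℓ := by
  have h := stmt6_main n P ℓ d htop hrec (fun _ => (1 : ℝ)) (fun v => (v : ℝ) / d)
    (by simp) (fun u => by push_cast; ring)
  calc stmt6Mom P n 0 (ℓ + 1)
      = ∑ u ∈ Finset.range (n + 1), (1 : ℝ) * P (ℓ + 1) u := by
        simp [stmt6Mom]
    _ = ∑ u ∈ Finset.range (n + 1),
          ((u : ℝ) / d + 1 * (1 - (u : ℝ) / d)) * P ℓ u := h
    _ = stmt6Mom P n 0 ℓ := by
        rw [stmt6Mom]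
        exact Finset.sum_congr rfl fun u _ => by ring

lemma stmt6_m1 (n : ℕ) (P : ℕ → ℕ → ℝ) (ℓ : ℕ) (d : ℝ)
    (htop : P ℓ (n + 1) = 0)
    (hrec : ∀ u : ℕ, P (ℓ + 1) u =
      P ℓ (u + 1) * (((u : ℝ) + 1) / d) + P ℓ u * (1 - (u : ℝ) / d)) :
    stmt6Mom P n 1 (ℓ + 1) = (1 - 1 / d) * stmt6Mom P n 1 ℓ := by
  have h := stmt6_main n P ℓ d htop hrec (fun u => (u : ℝ))
    (fun v => ((v : ℝ) - 1) * ((v : ℝ) / d)) (by simp) (fun u => by push_cast; ring)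
  calc stmt6Mom P n 1 (ℓ + 1)
      = ∑ u ∈ Finset.range (n + 1), (u : ℝ) * P (ℓ + 1) u := by
        simp [stmt6Mom]
    _ = ∑ u ∈ Finset.range (n + 1),
          (((u : ℝ) - 1) * ((u : ℝ) / d) + (u : ℝ) * (1 - (u : ℝ) / d)) * P ℓ u := h
    _ = (1 - 1 / d) * stmt6Mom P n 1 ℓ := by
        rw [stmt6Mom, Finset.mul_sum]
        exact Finset.sum_congr rfl fun u _ => by ring

lemma stmt6_m2 (n : ℕ) (P : ℕ → ℕ → ℝ) (ℓ : ℕ) (d : ℝ)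
    (htop : P ℓ (n + 1) = 0)
    (hrec : ∀ u : ℕ, P (ℓ + 1) u =
      P ℓ (u + 1) * (((u : ℝ) + 1) / d) + P ℓ u * (1 - (u : ℝ) / d)) :
    stmt6Mom P n 2 (ℓ + 1)
      = stmt6Mom P n 2 ℓ + (1 / d) * stmt6Mom P n 1 ℓ - (2 / d) * stmt6Mom P n 2 ℓ := by
  have h := stmt6_main n P ℓ d htop hrec (fun u => (u : ℝ) ^ 2)
    (fun v => ((v : ℝ) - 1) ^ 2 * ((v : ℝ) / d)) (by simp) (fun u => by push_cast; ring)
  calc stmt6Mom P n 2 (ℓ + 1)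
      = ∑ u ∈ Finset.range (n + 1), (u : ℝ) ^ 2 * P (ℓ + 1) u := rfl
    _ = ∑ u ∈ Finset.range (n + 1),
          (((u : ℝ) - 1) ^ 2 * ((u : ℝ) / d) + (u : ℝ) ^ 2 * (1 - (u : ℝ) / d)) * P ℓ u := h
    _ = stmt6Mom P n 2 ℓ + (1 / d) * stmt6Mom P n 1 ℓ - (2 / d) * stmt6Mom P n 2 ℓ := by
        simp only [stmt6Mom, Finset.mul_sum, ← Finset.sum_add_distrib, ← Finset.sum_sub_distrib]
        exact Finset.sum_congr rfl fun u _ => by ring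

theorem stmt_6 (S : ℕ) (hS : 0 < S) :
    ∃ C : ℝ, ∀ n : ℕ, 0 < n → ∀ P : ℕ → ℕ → ℝ,
      (∀ ℓ u, 0 ≤ P ℓ u) →
      (∀ ℓ u, n < u → P ℓ u = 0) →
      (∀ u, P 0 u = if u = n then 1 else 0) →
      (∀ ℓ, ℓ < S * n → ∀ u,
        P (ℓ + 1) u =
          P ℓ (u + 1) * (((u : ℝ) + 1) / ((n : ℝ) - (ℓ / S : ℕ)))
            + P ℓ u * (1 - (u : ℝ) / ((n : ℝ) - (ℓ / S : ℕ)))) →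
      ∀ ℓ : ℕ, ℓ / S < n →
        (∑ u ∈ Finset.range (n + 1), (u : ℝ) ^ 2 * P ℓ u)
            - (∑ u ∈ Finset.range (n + 1), (u : ℝ) * P ℓ u) ^ 2
          ≤ C * n := by
  refine ⟨(S : ℝ), ?_⟩
  intro n hn P hP0 hPn hPinit hPrec ℓ hℓ
  -- total mass is 1
  have hZ : ∀ j, j ≤ S * n → stmt6Mom P n 0 j = 1 := by
    intro j
    induction j with
    | zero =>
      intro _
      simp [stmt6Mom, hPinit, Finset.sum_ite_eq', Nat.lt_succ_iff]
    | succ j ih =>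
      intro hj
      have hj' : j < S * n := by omega
      rw [stmt6_m0 n P j _ (hPn j (n + 1) (by omega)) (hPrec j hj'), ih (by omega)]
  -- nonnegativity of moments
  have hm1nn : ∀ j, 0 ≤ stmt6Mom P n 1 j := by
    intro j
    exact Finset.sum_nonneg fun u _ => mul_nonneg (by positivity) (hP0 j u)
  have hm2nn : ∀ j, 0 ≤ stmt6Mom P n 2 j := by
    intro j
    exact Finset.sum_nonneg fun u _ => mul_nonneg (by positivity) (hP0 j u)
  -- Cauchy–Schwarz: variance is nonnegative
  have hCS : ∀ j, j ≤ S * n → (stmt6Mom P n 1 j) ^ 2 ≤ stmt6Mom P n 2 j := by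
    intro j hj
    have h := Finset.sum_mul_sq_le_sq_mul_sq (Finset.range (n + 1))
      (fun u => (u : ℝ) * Real.sqrt (P j u)) (fun u => Real.sqrt (P j u))
    have e1 : ∑ u ∈ Finset.range (n + 1),
        ((u : ℝ) * Real.sqrt (P j u)) * Real.sqrt (P j u)
        = stmt6Mom P n 1 j := by
      refine Finset.sum_congr rfl fun u _ => ?_
      rw [mul_assoc, Real.mul_self_sqrt (hP0 j u)]
      ring
    have e2 : ∑ u ∈ Finset.range (n + 1), ((u : ℝ) * Real.sqrt (P j u)) ^ 2
        = stmt6Mom P n 2 j := by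
      refine Finset.sum_congr rfl fun u _ => ?_
      rw [mul_pow, Real.sq_sqrt (hP0 j u)]
    have e3 : ∑ u ∈ Finset.range (n + 1), (Real.sqrt (P j u)) ^ 2
        = stmt6Mom P n 0 j := by
      refine Finset.sum_congr rfl fun u _ => ?_
      rw [Real.sq_sqrt (hP0 j u)]
      simp [stmt6Mom]
    rw [e1, e2, e3, hZ j hj, mul_one] at h
    exact h
  -- first moment bound
  have hm1 : ∀ j, j / S < n → stmt6Mom P n 1 j ≤ (n : ℝ) - ((j / S : ℕ) : ℝ) := by
    intro j
    induction j with
    | zero =>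
      intro _
      have : stmt6Mom P n 1 0 = (n : ℝ) := by
        simp [stmt6Mom, hPinit, Finset.sum_ite_eq', Nat.lt_succ_iff]
      rw [this]
      simp [Nat.zero_div]
    | succ j ih =>
      intro hj
      have hjS : j / S < n := lt_of_le_of_lt (Nat.div_le_div_right (Nat.le_succ j)) hj
      have hd1 : (1 : ℝ) ≤ (n : ℝ) - ((j / S : ℕ) : ℝ) := by
        have h1 : j / S + 1 ≤ n := hjS
        have h2 : ((j / S : ℕ) : ℝ) + 1 ≤ (n : ℝ) := by exact_mod_cast h1
        linarith
      have hlt : j < S * n := by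
        have h := (Nat.div_lt_iff_lt_mul hS).mp hjS
        rwa [Nat.mul_comm n S] at h
      have hgen : ∀ d : ℝ, 1 ≤ d → stmt6Mom P n 1 j ≤ d →
          (1 - 1 / d) * stmt6Mom P n 1 j ≤ d - 1 := by
        intro d hd1' hAd
        have hd0 : 0 < d := by linarith
        have hquot : 1 / d ≤ 1 := by
          rw [div_le_one hd0]; linarith
        have h2 : (1 - 1 / d) * stmt6Mom P n 1 j ≤ (1 - 1 / d) * d :=
          mul_le_mul_of_nonneg_left hAd (by linarith)
        have h3 : (1 - 1 / d) * d = d - 1 := by field_simp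
        linarith
      rw [stmt6_m1 n P j _ (hPn j (n + 1) (by omega)) (hPrec j hlt)]
      have h2 := hgen _ hd1 (ih hjS)
      have h4 : (((j + 1) / S : ℕ) : ℝ) ≤ ((j / S : ℕ) : ℝ) + 1 := by
        have h5 : (j + 1) / S ≤ j / S + 1 := by
          calc (j + 1) / S ≤ (j + S) / S := Nat.div_le_div_right (by omega)
            _ = j / S + 1 := Nat.add_div_right j hS
        exact_mod_cast h5
      linarith
  -- variance bound by induction
  have hVar : ∀ j, j / S < n →
      stmt6Mom P n 2 j - (stmt6Mom P n 1 j) ^ 2 ≤ (j : ℝ) := by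
    intro j
    induction j with
    | zero =>
      intro _
      have e1 : stmt6Mom P n 1 0 = (n : ℝ) := by
        simp [stmt6Mom, hPinit, Finset.sum_ite_eq', Nat.lt_succ_iff]
      have e2 : stmt6Mom P n 2 0 = (n : ℝ) ^ 2 := by
        simp [stmt6Mom, hPinit, Finset.sum_ite_eq', Nat.lt_succ_iff]
      rw [e1, e2]
      simp
    | succ j ih =>
      intro hj
      have hjS : j / S < n := lt_of_le_of_lt (Nat.div_le_div_right (Nat.le_succ j)) hj
      have hd1 : (1 : ℝ) ≤ (n : ℝ) - ((j / S : ℕ) : ℝ) := by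
        have h1 : j / S + 1 ≤ n := hjS
        have h2 : ((j / S : ℕ) : ℝ) + 1 ≤ (n : ℝ) := by exact_mod_cast h1
        linarith
      have hlt : j < S * n := by
        have h := (Nat.div_lt_iff_lt_mul hS).mp hjS
        rwa [Nat.mul_comm n S] at h
      have htop := hPn j (n + 1) (by omega)
      have hgen : ∀ d : ℝ, 1 ≤ d → stmt6Mom P n 1 j ≤ d →
          stmt6Mom P n 2 j + (1 / d) * stmt6Mom P n 1 j - (2 / d) * stmt6Mom P n 2 j
            - ((1 - 1 / d) * stmt6Mom P n 1 j) ^ 2 ≤ (j : ℝ) + 1 := by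
        intro d hd1' hAd
        have hd0 : 0 < d := by linarith
        have hvnn : 0 ≤ stmt6Mom P n 2 j - (stmt6Mom P n 1 j) ^ 2 := by
          have := hCS j (by omega)
          linarith
        have hid : stmt6Mom P n 2 j + (1 / d) * stmt6Mom P n 1 j
              - (2 / d) * stmt6Mom P n 2 j - ((1 - 1 / d) * stmt6Mom P n 1 j) ^ 2
            = (1 - 1 / d) ^ 2 * (stmt6Mom P n 2 j - (stmt6Mom P n 1 j) ^ 2)
              + stmt6Mom P n 1 j / d - stmt6Mom P n 2 j / d ^ 2 := by ring
        have hsq : (1 - 1 / d) ^ 2 ≤ 1 := by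
          have hq1 : 1 / d ≤ 1 := by rw [div_le_one hd0]; linarith
          have hq0 : 0 ≤ 1 / d := by positivity
          nlinarith
        have t1 : (1 - 1 / d) ^ 2 * (stmt6Mom P n 2 j - (stmt6Mom P n 1 j) ^ 2)
            ≤ stmt6Mom P n 2 j - (stmt6Mom P n 1 j) ^ 2 :=
          mul_le_of_le_one_left hvnn hsq
        have t2 : stmt6Mom P n 1 j / d ≤ 1 := by
          rw [div_le_one hd0]; exact hAd
        have t3 : 0 ≤ stmt6Mom P n 2 j / d ^ 2 := div_nonneg (hm2nn j) (by positivity)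
        have ihv : stmt6Mom P n 2 j - (stmt6Mom P n 1 j) ^ 2 ≤ (j : ℝ) := ih hjS
        rw [hid]; linarith
      rw [stmt6_m2 n P j _ htop (hPrec j hlt), stmt6_m1 n P j _ htop (hPrec j hlt)]
      calc stmt6Mom P n 2 j
            + (1 / ((n : ℝ) - ((j / S : ℕ) : ℝ))) * stmt6Mom P n 1 j
            - (2 / ((n : ℝ) - ((j / S : ℕ) : ℝ))) * stmt6Mom P n 2 j
            - ((1 - 1 / ((n : ℝ) - ((j / S : ℕ) : ℝ))) * stmt6Mom P n 1 j) ^ 2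
          ≤ (j : ℝ) + 1 := hgen _ hd1 (hm1 j hjS)
        _ = ((j + 1 : ℕ) : ℝ) := by push_cast; ring
  -- conclude
  have hfin := hVar ℓ hℓ
  have hℓle : (ℓ : ℝ) ≤ (S : ℝ) * (n : ℝ) := by
    have h1 : ℓ < n * S := (Nat.div_lt_iff_lt_mul hS).mp hℓ
    have h2 : (ℓ : ℝ) < (n : ℝ) * (S : ℝ) := by exact_mod_cast h1
    linarith
  have e1 : (∑ u ∈ Finset.range (n + 1), (u : ℝ) * P ℓ u) = stmt6Mom P n 1 ℓ := by
    simp [stmt6Mom]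
  have e2 : (∑ u ∈ Finset.range (n + 1), (u : ℝ) ^ 2 * P ℓ u) = stmt6Mom P n 2 ℓ := rfl
  rw [e1, e2]
  linarith
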